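/- Let X and Y be measurable spaces, let P_X be a probability measure on X, and let P_{Y|X} = (P_{Y|X=x})_{x∈X} be a conditional probability measure (Markov kernel) from X to Y. Let P_Y be the marginal probability measure on Y defined by P_Y(B) = ∫ P_{Y|X=x}(B) dP_X(x), let P_{XY} be the joint probability measure on X×Y defined by P_{XY}(A) = ∫ P_{Y|X=x}(A_x) dP_X(x) where A_x = {y : (x,y) ∈ A}, and let P_X P_Y be the product measure of the marginals. Assume that for every x ∈ X, P_Y is absolutely continuous with respect to P_{Y|X=x}. Then P_X P_Y is absolutely continuous with respect to P_{XY} and, for P_{XY}-almost every (x, y), (d(P_X P_Y)/dP_{XY})(x, y) = (dP_Y/dP_{Y|X=x})(y). -/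

import Mathlib

open MeasureTheory ProbabilityTheory
open scoped ENNReal

/-- Inverse Bayes-like rule (product of marginals vs joint): let `PX` be a
probability measure on `X`, `κ` a Markov kernel from `X` to `Y`, `PY` the
marginal on `Y` (`PY(B) = ∫ κ x (B) dPX(x)`), and `PXY` the joint probability
measure on `X × Y` (`PXY(A) = ∫ κ x (A_x) dPX(x)`). Assume `PY ≪ κ x` for
every `x`, and let `g` be a jointly measurable choice of the Radon–Nikodym
derivatives `(x, y) ↦ (dPY/d(κ x))(y)`, i.e. for every `x` and every measurable
`B`, `PY(B) = ∫ y in B, g (x, y) d(κ x)(y)`. Then `PX × PY ≪ PXY` and, for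
`PXY`-almost every `(x, y)`, `(d(PX × PY)/dPXY)(x, y) = (dPY/d(κ x))(y)`. -/
theorem inverse_bayes_like_rule {X Y : Type*} [MeasurableSpace X] [MeasurableSpace Y]
    (PX : Measure X) [IsProbabilityMeasure PX]
    (κ : Kernel X Y) [IsMarkovKernel κ]
    (PY : Measure Y) (hPY : ∀ B : Set Y, MeasurableSet B → PY B = ∫⁻ x, κ x B ∂PX)
    (PXY : Measure (X × Y))
    (hPXY : ∀ A : Set (X × Y), MeasurableSet A →
      PXY A = ∫⁻ x, κ x {y | (x, y) ∈ A} ∂PX)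
    (hac : ∀ x, PY ≪ κ x)
    (g : X × Y → ℝ≥0∞) (hg : Measurable g)
    (hgd : ∀ x, ∀ B : Set Y, MeasurableSet B → PY B = ∫⁻ y in B, g (x, y) ∂(κ x)) :
    PX.prod PY ≪ PXY ∧ (PX.prod PY).rnDeriv PXY =ᵐ[PXY] g := by
  -- PY is a probability measure
  have hPYuniv : PY Set.univ = 1 := by
    rw [hPY Set.univ MeasurableSet.univ]
    simp
  have : IsProbabilityMeasure PY := ⟨hPYuniv⟩
  -- PXY is the composition-product PX ⊗ₘ κ
  have hcomp : PXY = PX.compProd κ := by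
    ext A hA
    rw [hPXY A hA, Measure.compProd_apply hA]
    rfl
  -- PX.prod PY = PXY.withDensity g
  have hwd : PX.prod PY = PXY.withDensity g := by
    refine (Measure.prod_eq fun s t hs ht => ?_)
    rw [withDensity_apply _ (hs.prod ht), hcomp,
      Measure.setLIntegral_compProd hg hs ht]
    calc ∫⁻ x in s, ∫⁻ y in t, g (x, y) ∂(κ x) ∂PX
        = ∫⁻ x in s, PY t ∂PX := by
          refine setLIntegral_congr_fun hs (fun x _ => ?_)
          rw [hgd x t ht]
      _ = PX s * PY t := by
          rw [setLIntegral_const, mul_comm]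
  have : SigmaFinite PXY := by
    rw [hcomp]; infer_instance
  constructor
  · rw [hwd]
    exact withDensity_absolutelyContinuous _ _
  · rw [hwd]
    exact Measure.rnDeriv_withDensity PXY hg
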